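/- arXiv:2503.03498 — 12 statements merged into one kernel-verified Lean document; each statement's English description precedes it below -/
import Mathlib

section
/- Let Q be a semi-unital and semi-integral quantale that is a factor (its only two-sided elements are ⊥ and ⊤). Then for all α, β ∈ Q and every γ ∈ Q with γ ≠ ⊥, one has α * γ * β = α * β. -/
/-- A quantale: a complete lattice with an associative multiplication that
preserves arbitrary joins in each variable. -/
class Quantale' (α : Type*) extends CompleteLattice α, Semigroup α where
  mul_sSup_eq : ∀ (a : α) (s : Set α), a * sSup s = ⨆ b ∈ s, a * b
  sSup_mul_eq : ∀ (s : Set α) (a : α), sSup s * a = ⨆ b ∈ s, b * a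

section Defs

variable {α : Type*} [Quantale' α]

/-- `a` is left-sided: `⊤ * a ≤ a`. -/
def IsLeftSided (a : α) : Prop := ⊤ * a ≤ a

/-- `a` is right-sided: `a * ⊤ ≤ a`. -/
def IsRightSided (a : α) : Prop := a * ⊤ ≤ a

/-- `a` is two-sided. -/
def IsTwoSided (a : α) : Prop := IsLeftSided a ∧ IsRightSided a

/-- A quantale is semi-unital if `a ≤ ⊤ * a` and `a ≤ a * ⊤` for all `a`. -/
def SemiUnital (α : Type*) [Quantale' α] : Prop := ∀ a : α, a ≤ ⊤ * a ∧ a ≤ a * ⊤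

/-- A quantale is semi-integral if `a * ⊤ * b ≤ a * b` for all `a`, `b`. -/
def SemiIntegral (α : Type*) [Quantale' α] : Prop := ∀ a b : α, a * ⊤ * b ≤ a * b

/-- A quantale is a factor if its only two-sided elements are `⊥` and `⊤`. -/
def IsFactor (α : Type*) [Quantale' α] : Prop := ∀ a : α, IsTwoSided a → a = ⊥ ∨ a = ⊤

/-- Prime element of a quantale. -/
def IsPrime (p : α) : Prop :=
  p ≠ ⊤ ∧ ∀ a b : α, a * b ≤ p → a * ⊤ ≤ p ∨ ⊤ * b ≤ p

/-- Strongly prime element of a quantale. -/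
def IsStronglyPrime (p : α) : Prop :=
  p ≠ ⊤ ∧ ∀ a b : α, a * b ≤ p → a ⊔ a * ⊤ ≤ p ∨ b ⊔ ⊤ * b ≤ p

/-- A quantale is spatial if every element is a meet of prime elements. -/
def Spatial (α : Type*) [Quantale' α] : Prop :=
  ∀ a : α, ∃ S : Set α, (∀ p ∈ S, IsPrime p) ∧ a = sInf S

/-- A quantale is strongly spatial if every element is a meet of strongly prime elements. -/
def StronglySpatial (α : Type*) [Quantale' α] : Prop :=
  ∀ a : α, ∃ S : Set α, (∀ p ∈ S, IsStronglyPrime p) ∧ a = sInf S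

end Defs


section Aux
variable {Q : Type*} [Quantale' Q]

lemma qmul_le_qmul_left {a b : Q} (c : Q) (h : a ≤ b) : c * a ≤ c * b := by
  have : c * sSup {a, b} = ⨆ x ∈ ({a, b} : Set Q), c * x := Quantale'.mul_sSup_eq c {a, b}
  have hs : sSup ({a, b} : Set Q) = b := by
    rw [sSup_pair, sup_eq_right.mpr h]
  rw [hs] at this
  rw [this]
  exact le_biSup _ (Set.mem_insert a {b})

lemma qmul_le_qmul_right {a b : Q} (c : Q) (h : a ≤ b) : a * c ≤ b * c := by
  have : sSup {a, b} * c = ⨆ x ∈ ({a, b} : Set Q), x * c := Quantale'.sSup_mul_eq {a, b} c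
  have hs : sSup ({a, b} : Set Q) = b := by
    rw [sSup_pair, sup_eq_right.mpr h]
  rw [hs] at this
  rw [this]
  exact le_biSup (fun x => x * c) (Set.mem_insert a {b})

end Aux

/-- In a semi-unital, semi-integral factor quantale,
`α * γ * β = α * β` whenever `γ ≠ ⊥`. -/
theorem stmt0 {Q : Type*} [Quantale' Q] (hsu : SemiUnital Q) (hsi : SemiIntegral Q)
    (hf : IsFactor Q) :
    ∀ α β γ : Q, γ ≠ ⊥ → α * γ * β = α * β := by
  intro α β γ hγ
  have htwo : IsTwoSided (⊤ * γ * ⊤ : Q) := by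
    constructor
    · calc ⊤ * (⊤ * γ * ⊤) = ⊤ * ⊤ * γ * ⊤ := by rw [mul_assoc, mul_assoc, mul_assoc]
      _ ≤ ⊤ * γ * ⊤ := qmul_le_qmul_right _ (qmul_le_qmul_right _ le_top)
    · calc ⊤ * γ * ⊤ * ⊤ = ⊤ * γ * (⊤ * ⊤) := by rw [mul_assoc]
      _ ≤ ⊤ * γ * ⊤ := qmul_le_qmul_left _ le_top
  have hne : (⊤ * γ * ⊤ : Q) ≠ ⊥ := by
    intro h
    apply hγ
    have h1 : γ ≤ ⊤ * γ * ⊤ := le_trans (hsu γ).1 ((hsu (⊤ * γ)).2)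
    rw [h] at h1
    exact le_bot_iff.mp h1
  have htop : (⊤ * γ * ⊤ : Q) = ⊤ := (hf _ htwo).resolve_left hne
  apply le_antisymm
  · calc α * γ * β ≤ α * ⊤ * β := qmul_le_qmul_right _ (qmul_le_qmul_left _ le_top)
    _ ≤ α * β := hsi α β
  · calc α * β ≤ α * ⊤ * β := qmul_le_qmul_right _ (hsu α).2
    _ = α * (⊤ * γ * ⊤) * β := by rw [htop]
    _ = α * ⊤ * γ * ⊤ * β := by rw [mul_assoc α, mul_assoc α, ← mul_assoc α, ← mul_assoc]
    _ ≤ α * γ * ⊤ * β := qmul_le_qmul_right _ (qmul_le_qmul_right _ (hsi α γ))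
    _ = α * γ * (⊤ * β) := by rw [mul_assoc]
    _ ≤ α * γ * β := by
        have := hsi (α * γ) β
        rwa [mul_assoc] at this
end

section
/- Let Q be a semi-unital quantale such that the subquantale 𝕃(Q) of left-sided elements has no zero divisors. Then for every α ∈ Q with α ≠ ⊥ and every left-sided β ≠ ⊥, one has α * β ≠ ⊥. -/
lemma q_mul_bot {Q : Type*} [Quantale' Q] (a : Q) : a * (⊥ : Q) = ⊥ := by
  have := Quantale'.mul_sSup_eq a (∅ : Set Q)
  simpa using this

lemma q_mul_le_mul_left {Q : Type*} [Quantale' Q] {a b : Q} (h : a ≤ b) (c : Q) :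
    a * c ≤ b * c := by
  have h2 : sSup {a, b} * c = ⨆ x ∈ ({a, b} : Set Q), x * c := Quantale'.sSup_mul_eq _ _
  have hs : sSup ({a, b} : Set Q) = b := by
    simp [sSup_pair, sup_eq_right.mpr h]
  rw [hs] at h2
  rw [h2]
  exact le_biSup (fun x => x * c) (by simp)

/-- In a semi-unital quantale whose left-sided elements have no zero
divisors, `α * β ≠ ⊥` for any `α ≠ ⊥` and any left-sided `β ≠ ⊥`. -/
theorem stmt2 {Q : Type*} [Quantale' Q] (hsu : SemiUnital Q)
    (hL : ∀ x y : Q, IsLeftSided x → IsLeftSided y → x * y = ⊥ → x = ⊥ ∨ y = ⊥) :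
    ∀ α β : Q, α ≠ ⊥ → IsLeftSided β → β ≠ ⊥ → α * β ≠ ⊥ := by
  intro α β hα hβL hβ hab
  have hta : IsLeftSided (⊤ * α) := by
    unfold IsLeftSided
    rw [← mul_assoc]
    exact q_mul_le_mul_left le_top α
  have h0 : (⊤ * α) * β = ⊥ := by
    rw [mul_assoc, hab, q_mul_bot]
  rcases hL _ _ hta hβL h0 with h | h
  · exact hα (le_bot_iff.mp (h ▸ (hsu α).1))
  · exact hβ h
end

section
/- Every strongly spatial quantale is semi-unital, i.e., α ≤ ⊤ * α and α ≤ α * ⊤ for all α. -/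
/-- Every strongly spatial quantale is semi-unital. -/
theorem stmt5 {Q : Type*} [Quantale' Q] (h : StronglySpatial Q) : SemiUnital Q := by
  intro a
  constructor
  · obtain ⟨S, hS, hEq⟩ := h (⊤ * a)
    rw [hEq]
    apply le_sInf
    intro p hp
    have hpr := hS p hp
    have hle : ⊤ * a ≤ p := hEq ▸ sInf_le hp
    rcases hpr.2 ⊤ a hle with h1 | h2
    · exact absurd (top_le_iff.mp (le_trans le_sup_left h1)) hpr.1
    · exact le_trans le_sup_left h2
  · obtain ⟨S, hS, hEq⟩ := h (a * ⊤)
    rw [hEq]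
    apply le_sInf
    intro p hp
    have hpr := hS p hp
    have hle : a * ⊤ ≤ p := hEq ▸ sInf_le hp
    rcases hpr.2 a ⊤ hle with h1 | h2
    · exact le_trans le_sup_left h1
    · exact absurd (top_le_iff.mp (le_trans le_sup_left h2)) hpr.1
end

section
/- A quantale is strongly spatial if and only if it is spatial and semi-unital. -/
/-- A quantale is strongly spatial iff it is spatial and semi-unital. -/
theorem stmt6 {Q : Type*} [Quantale' Q] :
    StronglySpatial Q ↔ Spatial Q ∧ SemiUnital Q := by
  constructor
  · intro h
    refine ⟨fun a => ?_, fun a => ?_⟩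
    · obtain ⟨S, hS, ha⟩ := h a
      exact ⟨S, fun p hp => ⟨(hS p hp).1, fun x y hxy =>
        ((hS p hp).2 x y hxy).imp (fun h' => le_sup_right.trans h')
          (fun h' => le_sup_right.trans h')⟩, ha⟩
    · constructor
      · obtain ⟨S, hS, ha⟩ := h (⊤ * a)
        rw [ha]
        refine le_sInf fun p hp => ?_
        have hle : ⊤ * a ≤ p := ha ▸ sInf_le hp
        rcases (hS p hp).2 ⊤ a hle with h' | h'
        · exact absurd (top_le_iff.mp (le_sup_left.trans h')) (hS p hp).1
        · exact le_sup_left.trans h'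
      · obtain ⟨S, hS, ha⟩ := h (a * ⊤)
        rw [ha]
        refine le_sInf fun p hp => ?_
        have hle : a * ⊤ ≤ p := ha ▸ sInf_le hp
        rcases (hS p hp).2 a ⊤ hle with h' | h'
        · exact le_sup_left.trans h'
        · exact absurd (top_le_iff.mp (le_sup_left.trans h')) (hS p hp).1
  · rintro ⟨hsp, hsu⟩ a
    obtain ⟨S, hS, ha⟩ := hsp a
    refine ⟨S, fun p hp => ⟨(hS p hp).1, fun x y hxy => ?_⟩, ha⟩
    rcases (hS p hp).2 x y hxy with h' | h'
    · exact Or.inl (sup_le ((hsu x).2.trans h') h')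
    · exact Or.inr (sup_le ((hsu y).1.trans h') h')
end

section
/- Every strongly spatial quantale is pre-idempotent: α ≤ α * α for all α. -/
/-- Every strongly spatial quantale is pre-idempotent. -/
theorem stmt7 {Q : Type*} [Quantale' Q] (h : StronglySpatial Q) :
    ∀ a : Q, a ≤ a * a := by
  intro a
  obtain ⟨S, hS, hEq⟩ := h (a * a)
  rw [hEq]
  apply le_sInf
  intro p hp
  have hle : a * a ≤ p := hEq ▸ sInf_le hp
  rcases (hS p hp).2 a a hle with h' | h'
  · exact le_trans le_sup_left h'
  · exact le_trans le_sup_left h'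
end

section
/- If a strongly spatial quantale is left-sided (⊤ * α ≤ α for all α), then it is idempotent: α * α = α for all α. -/
/-- A left-sided strongly spatial quantale is idempotent. -/
theorem stmt8 {Q : Type*} [Quantale' Q] (h : StronglySpatial Q)
    (hl : ∀ a : Q, IsLeftSided a) :
    ∀ a : Q, a * a = a := by
  intro a
  have hmono : a * a ≤ ⊤ * a := by
    have : (⊤ : Q) * a = ⨆ b ∈ (Set.univ : Set Q), b * a := by
      rw [← Quantale'.sSup_mul_eq, sSup_univ]
    rw [this]
    exact le_iSup₂ (f := fun (b : Q) (_ : b ∈ Set.univ) => b * a) a (Set.mem_univ a)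
  have h1 : a * a ≤ a := hmono.trans (hl a)
  refine le_antisymm h1 ?_
  obtain ⟨S, hS, hEq⟩ := h (a * a)
  rw [hEq]
  apply le_sInf
  intro p hp
  have hle : a * a ≤ p := hEq ▸ sInf_le hp
  rcases (hS p hp).2 a a hle with h2 | h2
  · exact le_trans (le_sup_left) h2
  · exact le_trans (le_sup_left) h2
end

section
/- The trivial quantale on the 3-chain {⊥, a, ⊤} with multiplication x * y = ⊥ whenever x, y ≤ ⊤ (i.e., the constant-⊥ multiplication) is spatial but not strongly spatial: both ⊥ and a are prime, but ⊥ is not strongly prime. -/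
/-- The trivial quantale on the 3-chain `Fin 3 = {⊥ = 0 < 1 < 2 = ⊤}`:
the multiplication is constantly `⊥`. -/
noncomputable instance trivialC3Quantale : Quantale' (Fin 3) :=
  { (inferInstance : CompleteLattice (Fin 3)) with
    mul := fun _ _ => ⊥
    mul_assoc := fun _ _ _ => rfl
    mul_sSup_eq := fun a s => by
      show (⊥ : Fin 3) = ⨆ b ∈ s, (⊥ : Fin 3)
      simp
    sSup_mul_eq := fun s a => by
      show (⊥ : Fin 3) = ⨆ b ∈ s, (⊥ : Fin 3)
      simp }

/-- The trivial quantale on the 3-chain is spatial (both `⊥` and the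
middle element `1` are prime) but not strongly spatial (`⊥` is not strongly prime). -/
theorem stmt9 :
    IsPrime (⊥ : Fin 3) ∧ IsPrime (1 : Fin 3) ∧ Spatial (Fin 3) ∧
    ¬ IsStronglyPrime (⊥ : Fin 3) ∧ ¬ StronglySpatial (Fin 3) := by
  have hbotne : (⊥ : Fin 3) ≠ ⊤ := by decide
  have h1ne : (1 : Fin 3) ≠ ⊤ := by decide
  have hprime : ∀ p : Fin 3, p ≠ ⊤ → IsPrime p := by
    intro p hp
    exact ⟨hp, fun a b _ => Or.inl bot_le⟩
  have hnsp : ∀ p : Fin 3, ¬ IsStronglyPrime p := by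
    intro p ⟨hp, h⟩
    rcases h ⊤ ⊤ bot_le with h' | h' <;>
      exact hp (top_le_iff.mp (le_trans le_sup_left h'))
  refine ⟨hprime _ hbotne, hprime _ h1ne, ?_, hnsp _, ?_⟩
  · intro x
    by_cases hx : x = ⊤
    · exact ⟨∅, by simp, by simp [hx]⟩
    · exact ⟨{x}, by simpa using hprime x hx, by simp⟩
  · intro h
    obtain ⟨S, hS, hb⟩ := h ⊥
    have : S = ∅ := Set.eq_empty_iff_forall_notMem.mpr fun p hp => hnsp p (hS p hp)
    rw [this, sInf_empty] at hb
    exact hbotne hb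
end

section
/- Let Q and R be quantales and let ϑ_Q : Q → R and ϑ_R : R → Q be join-preserving maps that are anti-homomorphisms (ϑ(α * β) = ϑ(β) * ϑ(α)) with ϑ_R ∘ ϑ_Q = id_Q and ϑ_Q ∘ ϑ_R = id_R. Then the map ℓ on the tensor product Q ⊗ R determined on elementary tensors by ℓ(α ⊗ β) = ϑ_R(β) ⊗ ϑ_Q(α) is a join-preserving anti-homomorphism with ℓ ∘ ℓ = id, making Q ⊗ R an involutive quantale. -/
/-- If `ϑQ : Q → R` and `ϑR : R → Q` are mutually inverse join-preserving
anti-homomorphisms, then the map `ℓ` determined on elementary tensors of the tensor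
product `T = Q ⊗ R` by `ℓ(α ⊗ β) = ϑR β ⊗ ϑQ α` is a join-preserving anti-homomorphism
with `ℓ ∘ ℓ = id`, i.e. an involution on `Q ⊗ R`.

The tensor product is axiomatized: `T` is a quantale, `tmul` is a join-bimorphism whose
elementary tensors multiply componentwise and join-generate `T`, and `(T, tmul)` has the
universal property of the tensor product of complete lattices. -/
theorem stmt11 {Q R T : Type u} [Quantale' Q] [Quantale' R] [Quantale' T]
    (tmul : Q → R → T)
    (htmulL : ∀ (s : Set Q) (b : R), tmul (sSup s) b = ⨆ a ∈ s, tmul a b)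
    (htmulR : ∀ (a : Q) (s : Set R), tmul a (sSup s) = ⨆ b ∈ s, tmul a b)
    (htmulMul : ∀ (a₁ a₂ : Q) (b₁ b₂ : R),
      tmul a₁ b₁ * tmul a₂ b₂ = tmul (a₁ * a₂) (b₁ * b₂))
    (hgen : ∀ t : T, ∃ s : Set (Q × R), t = ⨆ p ∈ s, tmul p.1 p.2)
    (huniv : ∀ (S : Type u) [CompleteLattice S] (f : Q → R → S),
      (∀ (s : Set Q) (b : R), f (sSup s) b = ⨆ a ∈ s, f a b) →
      (∀ (a : Q) (s : Set R), f a (sSup s) = ⨆ b ∈ s, f a b) →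
      ∃! g : T → S, (∀ s : Set T, g (sSup s) = ⨆ x ∈ s, g x) ∧ ∀ a b, g (tmul a b) = f a b)
    (ϑQ : Q → R) (ϑR : R → Q)
    (hϑQjoin : ∀ s : Set Q, ϑQ (sSup s) = ⨆ a ∈ s, ϑQ a)
    (hϑRjoin : ∀ s : Set R, ϑR (sSup s) = ⨆ b ∈ s, ϑR b)
    (hϑQanti : ∀ a b : Q, ϑQ (a * b) = ϑQ b * ϑQ a)
    (hϑRanti : ∀ a b : R, ϑR (a * b) = ϑR b * ϑR a)
    (hRQ : ∀ a : Q, ϑR (ϑQ a) = a) (hQR : ∀ b : R, ϑQ (ϑR b) = b) :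
    ∃ ℓ : T → T,
      (∀ (a : Q) (b : R), ℓ (tmul a b) = tmul (ϑR b) (ϑQ a)) ∧
      (∀ s : Set T, ℓ (sSup s) = ⨆ x ∈ s, ℓ x) ∧
      (∀ x : T, ℓ (ℓ x) = x) ∧
      (∀ x y : T, ℓ (x * y) = ℓ y * ℓ x) := by
  
  -- obtain ℓ from the universal property
  obtain ⟨ℓ, ⟨hℓjoin, hℓtmul⟩, -⟩ :=
    huniv T (fun a b => tmul (ϑR b) (ϑQ a))
      (by
        intro s b
        simp only [hϑQjoin, ← sSup_image, htmulR, iSup_image]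
        rw [Set.image_image])
      (by
        intro a s
        simp only [hϑRjoin, ← sSup_image, htmulL, iSup_image]
        rw [Set.image_image])
  -- ℓ preserves indexed sups over sets
  have hmap : ∀ {X : Type u} (s : Set X) (f : X → T),
      ℓ (⨆ x ∈ s, f x) = ⨆ x ∈ s, ℓ (f x) := by
    intro X s f
    rw [← sSup_image, hℓjoin, iSup_image]
  -- multiplication distributes over indexed sups
  have hmulL : ∀ {X : Type u} (s : Set X) (f : X → T) (y : T),
      (⨆ x ∈ s, f x) * y = ⨆ x ∈ s, f x * y := by
    intro X s f y
    rw [← sSup_image, Quantale'.sSup_mul_eq, iSup_image]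
  have hmulR : ∀ {X : Type u} (s : Set X) (f : X → T) (y : T),
      y * (⨆ x ∈ s, f x) = ⨆ x ∈ s, y * f x := by
    intro X s f y
    rw [← sSup_image, Quantale'.mul_sSup_eq, iSup_image]
  refine ⟨ℓ, hℓtmul, hℓjoin, ?_, ?_⟩
  · intro x
    obtain ⟨s, rfl⟩ := hgen x
    rw [hmap, hmap]
    simp only [hℓtmul, hRQ, hQR]
  · intro x y
    obtain ⟨s, rfl⟩ := hgen x
    obtain ⟨t, rfl⟩ := hgen y
    simp only [hmulL, hmulR, htmulMul, hmap, hℓtmul, hϑQanti, hϑRanti]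
    exact iSup₂_comm _
end

section
/- For any quantale (Q, m), the tensor product Q ⊗ Q of Q with its opposite quantale, i.e. Q ⊗ Q with multiplication determined by (α₁ ⊗ β₁) ⋆ (α₂ ⊗ β₂) = (α₁ * α₂) ⊗ (β₂ * β₁), is an involutive quantale with involution given by the symmetry c(α ⊗ β) = β ⊗ α. Moreover, if Q is balanced (⊤ * ⊤ = ⊤), then the map α ↦ α ⊗ ⊤ is an injective quantale homomorphism from Q into this involutive quantale preserving ⊤; hence every balanced quantale embeds into an involutive quantale. -/
private lemma qh_map_biSup {T S : Type*} [CompleteLattice T] [CompleteLattice S]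
    (c : T → S) (h : ∀ s : Set T, c (sSup s) = ⨆ x ∈ s, c x)
    {ι : Type*} (s : Set ι) (g : ι → T) :
    c (⨆ i ∈ s, g i) = ⨆ i ∈ s, c (g i) := by
  rw [← sSup_image, h, iSup_image]

private lemma qh_mul_biSup {α : Type*} [Quantale' α] {ι : Type*} (a : α) (s : Set ι)
    (g : ι → α) : a * (⨆ i ∈ s, g i) = ⨆ i ∈ s, a * g i := by
  rw [← sSup_image, Quantale'.mul_sSup_eq, iSup_image]

private lemma qh_biSup_mul {α : Type*} [Quantale' α] {ι : Type*} (s : Set ι)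
    (g : ι → α) (a : α) : (⨆ i ∈ s, g i) * a = ⨆ i ∈ s, g i * a := by
  rw [← sSup_image, Quantale'.sSup_mul_eq, iSup_image]

/-- For any quantale `Q`, the tensor product `T = Q ⊗ Q^op` (elementary
tensors multiply by `(α₁ ⊗ β₁) ⋆ (α₂ ⊗ β₂) = (α₁ * α₂) ⊗ (β₂ * β₁)`) is an involutive
quantale with involution the symmetry `c (α ⊗ β) = β ⊗ α`; and if `Q` is balanced
(`⊤ * ⊤ = ⊤`) then `α ↦ α ⊗ ⊤` is an injective, join-preserving, multiplicative,
top-preserving quantale homomorphism of `Q` into this involutive quantale. -/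
theorem stmt12 {Q T : Type u} [Quantale' Q] [Quantale' T]
    (tmul : Q → Q → T)
    (htmulL : ∀ (s : Set Q) (b : Q), tmul (sSup s) b = ⨆ a ∈ s, tmul a b)
    (htmulR : ∀ (a : Q) (s : Set Q), tmul a (sSup s) = ⨆ b ∈ s, tmul a b)
    (htmulMul : ∀ a₁ b₁ a₂ b₂ : Q,
      tmul a₁ b₁ * tmul a₂ b₂ = tmul (a₁ * a₂) (b₂ * b₁))
    (hgen : ∀ t : T, ∃ s : Set (Q × Q), t = ⨆ p ∈ s, tmul p.1 p.2)
    (huniv : ∀ (S : Type u) [CompleteLattice S] (f : Q → Q → S),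
      (∀ (s : Set Q) (b : Q), f (sSup s) b = ⨆ a ∈ s, f a b) →
      (∀ (a : Q) (s : Set Q), f a (sSup s) = ⨆ b ∈ s, f a b) →
      ∃! g : T → S, (∀ s : Set T, g (sSup s) = ⨆ x ∈ s, g x) ∧ ∀ a b, g (tmul a b) = f a b) :
    (∃ c : T → T,
      (∀ a b : Q, c (tmul a b) = tmul b a) ∧
      (∀ s : Set T, c (sSup s) = ⨆ x ∈ s, c x) ∧
      (∀ x : T, c (c x) = x) ∧
      (∀ x y : T, c (x * y) = c y * c x)) ∧
    ((⊤ : Q) * ⊤ = ⊤ →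
      Function.Injective (fun a : Q => tmul a ⊤) ∧
      (∀ a b : Q, tmul (a * b) ⊤ = tmul a ⊤ * tmul b ⊤) ∧
      (∀ s : Set Q, tmul (sSup s) ⊤ = ⨆ a ∈ s, tmul a ⊤) ∧
      tmul (⊤ : Q) ⊤ = (⊤ : T)) := by
  -- every elementary tensor lies below `tmul ⊤ ⊤`
  have hmono : ∀ a b : Q, tmul a b ≤ tmul ⊤ ⊤ := by
    intro a b
    have h1 : tmul ⊤ ⊤ = ⨆ x ∈ (Set.univ : Set Q), tmul x ⊤ := by
      rw [← htmulL, sSup_univ]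
    have h2 : ∀ x : Q, tmul x ⊤ = ⨆ y ∈ (Set.univ : Set Q), tmul x y := by
      intro x; rw [← htmulR, sSup_univ]
    calc tmul a b ≤ ⨆ y ∈ (Set.univ : Set Q), tmul a y :=
          le_iSup₂ (f := fun y (_ : y ∈ (Set.univ : Set Q)) => tmul a y) b (Set.mem_univ b)
      _ = tmul a ⊤ := (h2 a).symm
      _ ≤ ⨆ x ∈ (Set.univ : Set Q), tmul x ⊤ :=
          le_iSup₂ (f := fun x (_ : x ∈ (Set.univ : Set Q)) => tmul x ⊤) a (Set.mem_univ a)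
      _ = tmul ⊤ ⊤ := h1.symm
  -- the involution
  obtain ⟨c, ⟨hcsup, hctm⟩, -⟩ := huniv T (fun a b => tmul b a)
    (fun s b => htmulR b s) (fun a s => htmulL s a)
  constructor
  · refine ⟨c, hctm, hcsup, ?_, ?_⟩
    · -- c ∘ c = id, by uniqueness of the map extending `tmul`
      obtain ⟨g, -, hgu⟩ := huniv T tmul htmulL htmulR
      have h1 : (fun x => c (c x)) = g := by
        apply hgu
        constructor
        · intro s
          rw [hcsup]
          exact qh_map_biSup c hcsup s (fun x => c x)
        · intro a b; rw [hctm, hctm]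
      have h2 : (fun x : T => x) = g := by
        apply hgu
        exact ⟨fun s => sSup_eq_iSup, fun a b => rfl⟩
      intro x
      exact (congrFun (h1.trans h2.symm) x)
    · intro x y
      obtain ⟨sx, hx⟩ := hgen x
      obtain ⟨sy, hy⟩ := hgen y
      subst hx; subst hy
      have hexp : ∀ u v : Set (Q × Q),
          (⨆ p ∈ u, tmul p.1 p.2) * (⨆ q ∈ v, tmul q.1 q.2)
            = ⨆ p ∈ u, ⨆ q ∈ v, tmul (p.1 * q.1) (q.2 * p.2) := by
        intro u v
        rw [qh_biSup_mul]
        refine iSup_congr fun p => iSup_congr fun _ => ?_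
        rw [qh_mul_biSup]
        exact iSup_congr fun q => iSup_congr fun _ => htmulMul _ _ _ _
      have hswap : ∀ u : Set (Q × Q),
          c (⨆ p ∈ u, tmul p.1 p.2) = ⨆ p ∈ Prod.swap '' u, tmul p.1 p.2 := by
        intro u
        rw [qh_map_biSup c hcsup, iSup_image]
        exact iSup_congr fun p => iSup_congr fun _ => hctm p.1 p.2
      calc c ((⨆ p ∈ sx, tmul p.1 p.2) * ⨆ q ∈ sy, tmul q.1 q.2)
          = c (⨆ p ∈ sx, ⨆ q ∈ sy, tmul (p.1 * q.1) (q.2 * p.2)) := by rw [hexp]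
        _ = ⨆ p ∈ sx, ⨆ q ∈ sy, tmul (q.2 * p.2) (p.1 * q.1) := by
            rw [qh_map_biSup c hcsup]
            refine iSup_congr fun p => iSup_congr fun _ => ?_
            rw [qh_map_biSup c hcsup]
            exact iSup_congr fun q => iSup_congr fun _ => hctm _ _
        _ = ⨆ q ∈ sy, ⨆ p ∈ sx, tmul (q.2 * p.2) (p.1 * q.1) := by
            exact iSup₂_comm _
        _ = c (⨆ q ∈ sy, tmul q.1 q.2) * c (⨆ p ∈ sx, tmul p.1 p.2) := by
            rw [hswap, hswap, hexp, iSup_image]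
            refine iSup_congr fun q => iSup_congr fun _ => ?_
            rw [iSup_image]
            rfl
  · intro hbal
    refine ⟨?_, ?_, fun s => htmulL s ⊤, ?_⟩
    · -- injectivity
      by_cases h0 : (⊤ : Q) = ⊥
      · intro a b _
        have ha : a = ⊥ := le_bot_iff.mp (h0 ▸ le_top)
        have hb : b = ⊥ := le_bot_iff.mp (h0 ▸ le_top)
        rw [ha, hb]
      · classical
        obtain ⟨g, ⟨-, hgtm⟩, -⟩ := huniv Q (fun a b => if b = ⊥ then ⊥ else a)
          (by
            intro s b
            show (if b = ⊥ then (⊥ : Q) else sSup s)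
                = ⨆ a ∈ s, if b = ⊥ then (⊥ : Q) else a
            by_cases hb : b = ⊥
            · simp [hb]
            · simp only [if_neg hb, sSup_eq_iSup])
          (by
            intro a s
            show (if sSup s = ⊥ then (⊥ : Q) else a)
                = ⨆ b ∈ s, if b = ⊥ then (⊥ : Q) else a
            by_cases hs : sSup s = ⊥
            · rw [if_pos hs]
              have h : ∀ b ∈ s, b = (⊥ : Q) := fun b hb => le_bot_iff.mp (hs ▸ le_sSup hb)
              refine le_antisymm bot_le (iSup₂_le fun b hb => ?_)
              rw [if_pos (h b hb)]
            · rw [if_neg hs]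
              obtain ⟨b₀, hb₀, hb₀ne⟩ : ∃ b ∈ s, b ≠ (⊥ : Q) := by
                by_contra hcon
                push_neg at hcon
                exact hs (le_bot_iff.mp (sSup_le fun b hb => (hcon b hb).le))
              apply le_antisymm
              · exact le_trans (le_of_eq (if_neg hb₀ne).symm)
                  (le_iSup₂ (f := fun b (_ : b ∈ s) => if b = ⊥ then (⊥ : Q) else a)
                    b₀ hb₀)
              · refine iSup₂_le fun b hb => ?_
                split_ifs
                · exact bot_le
                · exact le_rfl)
        intro a b hab
        have h := congrArg g hab
        simp only [hgtm, if_neg h0] at h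
        exact h
    · intro a b
      rw [htmulMul, hbal]
    · apply le_antisymm le_top
      obtain ⟨s, hs⟩ := hgen (⊤ : T)
      rw [hs]
      exact iSup₂_le fun p _ => hmono p.1 p.2
end

section
/- Let Q be a strongly spatial quantale and p a strongly prime element. Then the map h_p : Q → Q₂ defined by cases (h_p(α) = ⊥ if ⊤*α*⊤ ≤ p; = b if ⊤*α*⊤ ≰ p, α*⊤ ≤ p, ⊤*α ≤ p; = a_ℓ if α*⊤ ≰ p and ⊤*α ≤ p; = a_r if α*⊤ ≤ p and ⊤*α ≰ p; = c if α ≤ p, α*⊤ ≰ p, ⊤*α ≰ p; = ⊤ if α ≰ p) is a quantale homomorphism with h_p(⊤) = ⊤, assuming Q is semi-unital. -/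
section Aux

variable {Q : Type*} [Quantale' Q]

theorem q_mul_le_mul_left_s16 (a : Q) {x y : Q} (hxy : x ≤ y) : a * x ≤ a * y := by
  have hx : a * (x ⊔ y) = a * x ⊔ a * y := by
    rw [← sSup_pair, Quantale'.mul_sSup_eq]
    exact iSup_pair
  rw [sup_eq_right.mpr hxy] at hx
  rw [hx]
  exact le_sup_left

theorem q_mul_le_mul_right {x y : Q} (hxy : x ≤ y) (a : Q) : x * a ≤ y * a := by
  have hx : (x ⊔ y) * a = x * a ⊔ y * a := by
    rw [← sSup_pair, Quantale'.sSup_mul_eq]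
    exact iSup_pair
  rw [sup_eq_right.mpr hxy] at hx
  rw [hx]
  exact le_sup_left

theorem q_iSup_mul {ι : Sort*} (f : ι → Q) (a : Q) : (⨆ i, f i) * a = ⨆ i, f i * a := by
  rw [← sSup_range, Quantale'.sSup_mul_eq, iSup_range]

end Aux


set_option maxHeartbeats 1000000 in
/-- For a strongly spatial (hence semi-unital) quantale `Q` and a
strongly prime element `p`, the case-defined map `h_p : Q → Q₂` is a quantale
homomorphism with `h_p ⊤ = ⊤`. -/
theorem stmt16 {Q : Type*} [Quantale' Q] {Q2 : Type*} [Quantale' Q2]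
    (b al ar c : Q2)
    (hbot_b : ⊥ < b) (hb_al : b < al) (hb_ar : b < ar)
    (hsup : al ⊔ ar = c) (hinf : al ⊓ ar = b) (hc_top : c < ⊤)
    (hincomp : ¬ al ≤ ar ∧ ¬ ar ≤ al)
    (helts : ∀ x : Q2, x = ⊥ ∨ x = b ∨ x = al ∨ x = ar ∨ x = c ∨ x = ⊤)
    (t1 : b * b = b) (t2 : b * al = b) (t3 : b * ar = ar) (t4 : b * c = ar)
    (t5 : b * ⊤ = ar)
    (t6 : al * b = al) (t7 : al * al = al) (t8 : al * ar = ⊤) (t9 : al * c = ⊤)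
    (t10 : al * ⊤ = ⊤)
    (t11 : ar * b = b) (t12 : ar * al = b) (t13 : ar * ar = ar) (t14 : ar * c = ar)
    (t15 : ar * ⊤ = ar)
    (t16 : c * b = al) (t17 : c * al = al) (t18 : c * ar = ⊤) (t19 : c * c = ⊤)
    (t20 : c * ⊤ = ⊤)
    (t21 : ⊤ * b = al) (t22 : ⊤ * al = al) (t23 : ⊤ * ar = ⊤) (t24 : ⊤ * c = ⊤)
    (t25 : (⊤ : Q2) * ⊤ = ⊤)
    (tbot : ∀ x : Q2, ⊥ * x = ⊥ ∧ x * ⊥ = ⊥)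
    (hss : StronglySpatial Q) (hsu : SemiUnital Q)
    (p : Q) (hp : IsStronglyPrime p) :
    ∃ h : Q → Q2,
      (∀ α : Q, ⊤ * α * ⊤ ≤ p → h α = ⊥) ∧
      (∀ α : Q, ¬ ⊤ * α * ⊤ ≤ p → α * ⊤ ≤ p → ⊤ * α ≤ p → h α = b) ∧
      (∀ α : Q, ¬ α * ⊤ ≤ p → ⊤ * α ≤ p → h α = al) ∧
      (∀ α : Q, α * ⊤ ≤ p → ¬ ⊤ * α ≤ p → h α = ar) ∧
      (∀ α : Q, α ≤ p → ¬ α * ⊤ ≤ p → ¬ ⊤ * α ≤ p → h α = c) ∧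
      (∀ α : Q, ¬ α ≤ p → h α = ⊤) ∧
      (∀ s : Set Q, h (sSup s) = ⨆ a ∈ s, h a) ∧
      (∀ x y : Q, h (x * y) = h x * h y) ∧
      h (⊤ : Q) = ⊤ := by
  classical
  set h : Q → Q2 := fun α =>
    if ⊤ * α * ⊤ ≤ p then ⊥
    else if α * ⊤ ≤ p then (if ⊤ * α ≤ p then b else ar)
    else if ⊤ * α ≤ p then al
    else if α ≤ p then c
    else ⊤ with hdef
  -- implications between predicates
  have i21 : ∀ α : Q, α * ⊤ ≤ p → α ≤ p := fun α hh => (hsu α).2.trans hh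
  have i31 : ∀ α : Q, ⊤ * α ≤ p → α ≤ p := fun α hh => (hsu α).1.trans hh
  have i02 : ∀ α : Q, ⊤ * α * ⊤ ≤ p → α * ⊤ ≤ p := fun α hh =>
    (hsu (α * ⊤)).1.trans (by rwa [← mul_assoc])
  have i03 : ∀ α : Q, ⊤ * α * ⊤ ≤ p → ⊤ * α ≤ p := fun α hh =>
    (hsu (⊤ * α)).2.trans hh
  -- value lemmas
  have hv0 : ∀ α : Q, ⊤ * α * ⊤ ≤ p → h α = ⊥ := by
    intro α h0; simp only [hdef]; rw [if_pos h0]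
  have hvb : ∀ α : Q, ¬ ⊤ * α * ⊤ ≤ p → α * ⊤ ≤ p → ⊤ * α ≤ p → h α = b := by
    intro α h0 h2 h3; simp only [hdef]; rw [if_neg h0, if_pos h2, if_pos h3]
  have hval : ∀ α : Q, ¬ α * ⊤ ≤ p → ⊤ * α ≤ p → h α = al := by
    intro α h2 h3; simp only [hdef]
    rw [if_neg (fun hh => h2 (i02 α hh)), if_neg h2, if_pos h3]
  have hvar : ∀ α : Q, α * ⊤ ≤ p → ¬ ⊤ * α ≤ p → h α = ar := by
    intro α h2 h3; simp only [hdef]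
    rw [if_neg (fun hh => h3 (i03 α hh)), if_pos h2, if_neg h3]
  have hvc : ∀ α : Q, α ≤ p → ¬ α * ⊤ ≤ p → ¬ ⊤ * α ≤ p → h α = c := by
    intro α h1 h2 h3; simp only [hdef]
    rw [if_neg (fun hh => h2 (i02 α hh)), if_neg h2, if_neg h3, if_pos h1]
  have hvt : ∀ α : Q, ¬ α ≤ p → h α = ⊤ := by
    intro α h1; simp only [hdef]
    have h2 : ¬ α * ⊤ ≤ p := fun hh => h1 (i21 α hh)
    have h3 : ¬ ⊤ * α ≤ p := fun hh => h1 (i31 α hh)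
    rw [if_neg (fun hh => h2 (i02 α hh)), if_neg h2, if_neg h3, if_neg h1]
  -- classification into six states
  have cls : ∀ α : Q,
      (⊤ * α * ⊤ ≤ p ∧ α * ⊤ ≤ p ∧ ⊤ * α ≤ p ∧ α ≤ p) ∨
      (¬ ⊤ * α * ⊤ ≤ p ∧ α * ⊤ ≤ p ∧ ⊤ * α ≤ p ∧ α ≤ p) ∨
      (¬ ⊤ * α * ⊤ ≤ p ∧ ¬ α * ⊤ ≤ p ∧ ⊤ * α ≤ p ∧ α ≤ p) ∨
      (¬ ⊤ * α * ⊤ ≤ p ∧ α * ⊤ ≤ p ∧ ¬ ⊤ * α ≤ p ∧ α ≤ p) ∨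
      (¬ ⊤ * α * ⊤ ≤ p ∧ ¬ α * ⊤ ≤ p ∧ ¬ ⊤ * α ≤ p ∧ α ≤ p) ∨
      (¬ ⊤ * α * ⊤ ≤ p ∧ ¬ α * ⊤ ≤ p ∧ ¬ ⊤ * α ≤ p ∧ ¬ α ≤ p) := by
    intro α
    by_cases h0 : ⊤ * α * ⊤ ≤ p
    · exact Or.inl ⟨h0, i02 α h0, i03 α h0, i21 α (i02 α h0)⟩
    · by_cases h2 : α * ⊤ ≤ p
      · by_cases h3 : ⊤ * α ≤ p
        · exact Or.inr (Or.inl ⟨h0, h2, h3, i21 α h2⟩)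
        · exact Or.inr (Or.inr (Or.inr (Or.inl ⟨h0, h2, h3, i21 α h2⟩)))
      · by_cases h3 : ⊤ * α ≤ p
        · exact Or.inr (Or.inr (Or.inl ⟨h0, h2, h3, i31 α h3⟩))
        · by_cases h1 : α ≤ p
          · exact Or.inr (Or.inr (Or.inr (Or.inr (Or.inl ⟨h0, h2, h3, h1⟩))))
          · exact Or.inr (Or.inr (Or.inr (Or.inr (Or.inr ⟨h0, h2, h3, h1⟩))))
  -- the key prime-element equivalences
  have keyD : ∀ x y : Q, (x * y ≤ p ↔ (x * ⊤ ≤ p ∨ ⊤ * y ≤ p)) := by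
    intro x y
    constructor
    · intro hxy
      rcases hp.2 x y hxy with hh | hh
      · exact Or.inl (sup_le_iff.mp hh).2
      · exact Or.inr (sup_le_iff.mp hh).2
    · rintro (hh | hh)
      · exact (q_mul_le_mul_left_s16 x le_top).trans hh
      · exact (q_mul_le_mul_right le_top y).trans hh
  have keyA : ∀ x y : Q, (⊤ * (x * y) * ⊤ ≤ p ↔ (⊤ * x * ⊤ ≤ p ∨ ⊤ * y * ⊤ ≤ p)) := by
    intro x y
    have hh := keyD (⊤ * x) (y * ⊤)
    have e1 : (⊤ * x) * (y * ⊤) = ⊤ * (x * y) * ⊤ := by simp only [mul_assoc]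
    have e2 : ⊤ * (y * ⊤) = ⊤ * y * ⊤ := (mul_assoc _ _ _).symm
    rw [e1, e2] at hh
    exact hh
  have keyB : ∀ x y : Q, (x * y * ⊤ ≤ p ↔ (x * ⊤ ≤ p ∨ ⊤ * y * ⊤ ≤ p)) := by
    intro x y
    have hh := keyD x (y * ⊤)
    have e1 : x * (y * ⊤) = x * y * ⊤ := (mul_assoc _ _ _).symm
    have e2 : ⊤ * (y * ⊤) = ⊤ * y * ⊤ := (mul_assoc _ _ _).symm
    rw [e1, e2] at hh
    exact hh
  have keyC : ∀ x y : Q, (⊤ * (x * y) ≤ p ↔ (⊤ * x * ⊤ ≤ p ∨ ⊤ * y ≤ p)) := by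
    intro x y
    have hh := keyD (⊤ * x) y
    have e1 : (⊤ * x) * y = ⊤ * (x * y) := mul_assoc _ _ _
    rw [e1] at hh
    exact hh
  -- characterization of predicates on sSup
  have cP1 : ∀ s : Set Q, (sSup s ≤ p ↔ ∀ a ∈ s, a ≤ p) := fun s => sSup_le_iff
  have cP2 : ∀ s : Set Q, (sSup s * ⊤ ≤ p ↔ ∀ a ∈ s, a * ⊤ ≤ p) := by
    intro s
    constructor
    · intro hh a ha
      exact (q_mul_le_mul_right (le_sSup ha) ⊤).trans hh
    · intro hh
      rw [Quantale'.sSup_mul_eq]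
      exact iSup₂_le hh
  have cP3 : ∀ s : Set Q, (⊤ * sSup s ≤ p ↔ ∀ a ∈ s, ⊤ * a ≤ p) := by
    intro s
    constructor
    · intro hh a ha
      exact (q_mul_le_mul_left_s16 ⊤ (le_sSup ha)).trans hh
    · intro hh
      rw [Quantale'.mul_sSup_eq]
      exact iSup₂_le hh
  have cP0 : ∀ s : Set Q, (⊤ * sSup s * ⊤ ≤ p ↔ ∀ a ∈ s, ⊤ * a * ⊤ ≤ p) := by
    intro s
    constructor
    · intro hh a ha
      exact (q_mul_le_mul_right (q_mul_le_mul_left_s16 ⊤ (le_sSup ha)) ⊤).trans hh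
    · intro hh
      rw [Quantale'.mul_sSup_eq, q_iSup_mul]
      refine iSup_le fun a => ?_
      rw [q_iSup_mul]
      exact iSup_le fun ha => hh a ha
  -- lattice facts in Q2
  have hal_c : al ≤ c := hsup ▸ le_sup_left
  have har_c : ar ≤ c := hsup ▸ le_sup_right
  -- multiplicativity
  have hmul : ∀ x y : Q, h (x * y) = h x * h y := by
    intro x y
    rcases cls x with ⟨x0,x2,x3,x1⟩|⟨x0,x2,x3,x1⟩|⟨x0,x2,x3,x1⟩|⟨x0,x2,x3,x1⟩|⟨x0,x2,x3,x1⟩|⟨x0,x2,x3,x1⟩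
    · -- x : bot
      rcases cls y with ⟨y0,y2,y3,y1⟩|⟨y0,y2,y3,y1⟩|⟨y0,y2,y3,y1⟩|⟨y0,y2,y3,y1⟩|⟨y0,y2,y3,y1⟩|⟨y0,y2,y3,y1⟩
      · rw [hv0 (x*y) ((keyA x y).2 (Or.inl x0)), hv0 x x0, hv0 y y0, (tbot ⊥).1]
      · rw [hv0 (x*y) ((keyA x y).2 (Or.inl x0)), hv0 x x0, hvb y y0 y2 y3, (tbot b).1]
      · rw [hv0 (x*y) ((keyA x y).2 (Or.inl x0)), hv0 x x0, hval y y2 y3, (tbot al).1]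
      · rw [hv0 (x*y) ((keyA x y).2 (Or.inl x0)), hv0 x x0, hvar y y2 y3, (tbot ar).1]
      · rw [hv0 (x*y) ((keyA x y).2 (Or.inl x0)), hv0 x x0, hvc y y1 y2 y3, (tbot c).1]
      · rw [hv0 (x*y) ((keyA x y).2 (Or.inl x0)), hv0 x x0, hvt y y1, (tbot (⊤ : Q2)).1]
    · -- x : b
      rcases cls y with ⟨y0,y2,y3,y1⟩|⟨y0,y2,y3,y1⟩|⟨y0,y2,y3,y1⟩|⟨y0,y2,y3,y1⟩|⟨y0,y2,y3,y1⟩|⟨y0,y2,y3,y1⟩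
      · rw [hv0 (x*y) ((keyA x y).2 (Or.inr y0)), hvb x x0 x2 x3, hv0 y y0, (tbot b).2]
      · rw [hvb (x*y) (fun hh => ((keyA x y).1 hh).elim x0 y0) ((keyB x y).2 (Or.inl x2)) ((keyC x y).2 (Or.inr y3)), hvb x x0 x2 x3, hvb y y0 y2 y3, t1]
      · rw [hvb (x*y) (fun hh => ((keyA x y).1 hh).elim x0 y0) ((keyB x y).2 (Or.inl x2)) ((keyC x y).2 (Or.inr y3)), hvb x x0 x2 x3, hval y y2 y3, t2]
      · rw [hvar (x*y) ((keyB x y).2 (Or.inl x2)) (fun hh => ((keyC x y).1 hh).elim x0 y3), hvb x x0 x2 x3, hvar y y2 y3, t3]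
      · rw [hvar (x*y) ((keyB x y).2 (Or.inl x2)) (fun hh => ((keyC x y).1 hh).elim x0 y3), hvb x x0 x2 x3, hvc y y1 y2 y3, t4]
      · rw [hvar (x*y) ((keyB x y).2 (Or.inl x2)) (fun hh => ((keyC x y).1 hh).elim x0 y3), hvb x x0 x2 x3, hvt y y1, t5]
    · -- x : al
      rcases cls y with ⟨y0,y2,y3,y1⟩|⟨y0,y2,y3,y1⟩|⟨y0,y2,y3,y1⟩|⟨y0,y2,y3,y1⟩|⟨y0,y2,y3,y1⟩|⟨y0,y2,y3,y1⟩
      · rw [hv0 (x*y) ((keyA x y).2 (Or.inr y0)), hval x x2 x3, hv0 y y0, (tbot al).2]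
      · rw [hval (x*y) (fun hh => ((keyB x y).1 hh).elim x2 y0) ((keyC x y).2 (Or.inr y3)), hval x x2 x3, hvb y y0 y2 y3, t6]
      · rw [hval (x*y) (fun hh => ((keyB x y).1 hh).elim x2 y0) ((keyC x y).2 (Or.inr y3)), hval x x2 x3, hval y y2 y3, t7]
      · rw [hvt (x*y) (fun hh => ((keyD x y).1 hh).elim x2 y3), hval x x2 x3, hvar y y2 y3, t8]
      · rw [hvt (x*y) (fun hh => ((keyD x y).1 hh).elim x2 y3), hval x x2 x3, hvc y y1 y2 y3, t9]
      · rw [hvt (x*y) (fun hh => ((keyD x y).1 hh).elim x2 y3), hval x x2 x3, hvt y y1, t10]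
    · -- x : ar
      rcases cls y with ⟨y0,y2,y3,y1⟩|⟨y0,y2,y3,y1⟩|⟨y0,y2,y3,y1⟩|⟨y0,y2,y3,y1⟩|⟨y0,y2,y3,y1⟩|⟨y0,y2,y3,y1⟩
      · rw [hv0 (x*y) ((keyA x y).2 (Or.inr y0)), hvar x x2 x3, hv0 y y0, (tbot ar).2]
      · rw [hvb (x*y) (fun hh => ((keyA x y).1 hh).elim x0 y0) ((keyB x y).2 (Or.inl x2)) ((keyC x y).2 (Or.inr y3)), hvar x x2 x3, hvb y y0 y2 y3, t11]
      · rw [hvb (x*y) (fun hh => ((keyA x y).1 hh).elim x0 y0) ((keyB x y).2 (Or.inl x2)) ((keyC x y).2 (Or.inr y3)), hvar x x2 x3, hval y y2 y3, t12]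
      · rw [hvar (x*y) ((keyB x y).2 (Or.inl x2)) (fun hh => ((keyC x y).1 hh).elim x0 y3), hvar x x2 x3, hvar y y2 y3, t13]
      · rw [hvar (x*y) ((keyB x y).2 (Or.inl x2)) (fun hh => ((keyC x y).1 hh).elim x0 y3), hvar x x2 x3, hvc y y1 y2 y3, t14]
      · rw [hvar (x*y) ((keyB x y).2 (Or.inl x2)) (fun hh => ((keyC x y).1 hh).elim x0 y3), hvar x x2 x3, hvt y y1, t15]
    · -- x : c
      rcases cls y with ⟨y0,y2,y3,y1⟩|⟨y0,y2,y3,y1⟩|⟨y0,y2,y3,y1⟩|⟨y0,y2,y3,y1⟩|⟨y0,y2,y3,y1⟩|⟨y0,y2,y3,y1⟩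
      · rw [hv0 (x*y) ((keyA x y).2 (Or.inr y0)), hvc x x1 x2 x3, hv0 y y0, (tbot c).2]
      · rw [hval (x*y) (fun hh => ((keyB x y).1 hh).elim x2 y0) ((keyC x y).2 (Or.inr y3)), hvc x x1 x2 x3, hvb y y0 y2 y3, t16]
      · rw [hval (x*y) (fun hh => ((keyB x y).1 hh).elim x2 y0) ((keyC x y).2 (Or.inr y3)), hvc x x1 x2 x3, hval y y2 y3, t17]
      · rw [hvt (x*y) (fun hh => ((keyD x y).1 hh).elim x2 y3), hvc x x1 x2 x3, hvar y y2 y3, t18]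
      · rw [hvt (x*y) (fun hh => ((keyD x y).1 hh).elim x2 y3), hvc x x1 x2 x3, hvc y y1 y2 y3, t19]
      · rw [hvt (x*y) (fun hh => ((keyD x y).1 hh).elim x2 y3), hvc x x1 x2 x3, hvt y y1, t20]
    · -- x : top
      rcases cls y with ⟨y0,y2,y3,y1⟩|⟨y0,y2,y3,y1⟩|⟨y0,y2,y3,y1⟩|⟨y0,y2,y3,y1⟩|⟨y0,y2,y3,y1⟩|⟨y0,y2,y3,y1⟩
      · rw [hv0 (x*y) ((keyA x y).2 (Or.inr y0)), hvt x x1, hv0 y y0, (tbot (⊤ : Q2)).2]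
      · rw [hval (x*y) (fun hh => ((keyB x y).1 hh).elim x2 y0) ((keyC x y).2 (Or.inr y3)), hvt x x1, hvb y y0 y2 y3, t21]
      · rw [hval (x*y) (fun hh => ((keyB x y).1 hh).elim x2 y0) ((keyC x y).2 (Or.inr y3)), hvt x x1, hval y y2 y3, t22]
      · rw [hvt (x*y) (fun hh => ((keyD x y).1 hh).elim x2 y3), hvt x x1, hvar y y2 y3, t23]
      · rw [hvt (x*y) (fun hh => ((keyD x y).1 hh).elim x2 y3), hvt x x1, hvc y y1 y2 y3, t24]
      · rw [hvt (x*y) (fun hh => ((keyD x y).1 hh).elim x2 y3), hvt x x1, hvt y y1, t25]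

  -- join preservation
  have hsups : ∀ s : Set Q, h (sSup s) = ⨆ a ∈ s, h a := by
    intro s
    rcases cls (sSup s) with ⟨s0,s2,s3,s1⟩|⟨s0,s2,s3,s1⟩|⟨s0,s2,s3,s1⟩|⟨s0,s2,s3,s1⟩|⟨s0,s2,s3,s1⟩|⟨s0,s2,s3,s1⟩
    · rw [hv0 _ s0]
      exact (le_antisymm (iSup₂_le fun a ha => le_of_eq (hv0 a ((cP0 s).1 s0 a ha))) bot_le).symm
    · rw [hvb _ s0 s2 s3]
      have m2 := (cP2 s).1 s2
      have m3 := (cP3 s).1 s3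
      obtain ⟨a, ha, ha0⟩ : ∃ a ∈ s, ¬ ⊤ * a * ⊤ ≤ p := by
        by_contra hc
        push_neg at hc
        exact s0 ((cP0 s).2 hc)
      refine le_antisymm ?_ (iSup₂_le fun a' ha' => ?_)
      · rw [← hvb a ha0 (m2 a ha) (m3 a ha)]
        exact le_iSup₂ (f := fun a _ => h a) a ha
      · by_cases a0 : ⊤ * a' * ⊤ ≤ p
        · rw [hv0 a' a0]; exact bot_le
        · rw [hvb a' a0 (m2 a' ha') (m3 a' ha')]
    · rw [hval _ s2 s3]
      have m3 := (cP3 s).1 s3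
      obtain ⟨a, ha, ha2⟩ : ∃ a ∈ s, ¬ a * ⊤ ≤ p := by
        by_contra hc
        push_neg at hc
        exact s2 ((cP2 s).2 hc)
      refine le_antisymm ?_ (iSup₂_le fun a' ha' => ?_)
      · rw [← hval a ha2 (m3 a ha)]
        exact le_iSup₂ (f := fun a _ => h a) a ha
      · by_cases a0 : ⊤ * a' * ⊤ ≤ p
        · rw [hv0 a' a0]; exact bot_le
        · by_cases a2 : a' * ⊤ ≤ p
          · rw [hvb a' a0 a2 (m3 a' ha')]; exact hb_al.le
          · rw [hval a' a2 (m3 a' ha')]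
    · rw [hvar _ s2 s3]
      have m2 := (cP2 s).1 s2
      obtain ⟨a, ha, ha3⟩ : ∃ a ∈ s, ¬ ⊤ * a ≤ p := by
        by_contra hc
        push_neg at hc
        exact s3 ((cP3 s).2 hc)
      refine le_antisymm ?_ (iSup₂_le fun a' ha' => ?_)
      · rw [← hvar a (m2 a ha) ha3]
        exact le_iSup₂ (f := fun a _ => h a) a ha
      · by_cases a0 : ⊤ * a' * ⊤ ≤ p
        · rw [hv0 a' a0]; exact bot_le
        · by_cases a3 : ⊤ * a' ≤ p
          · rw [hvb a' a0 (m2 a' ha') a3]; exact hb_ar.le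
          · rw [hvar a' (m2 a' ha') a3]
    · rw [hvc _ s1 s2 s3]
      have m1 : ∀ a ∈ s, a ≤ p := fun a ha => (le_sSup ha).trans s1
      obtain ⟨a2w, ha2w, hw2⟩ : ∃ a ∈ s, ¬ a * ⊤ ≤ p := by
        by_contra hc
        push_neg at hc
        exact s2 ((cP2 s).2 hc)
      obtain ⟨a3w, ha3w, hw3⟩ : ∃ a ∈ s, ¬ ⊤ * a ≤ p := by
        by_contra hc
        push_neg at hc
        exact s3 ((cP3 s).2 hc)
      have hall : al ≤ ⨆ a ∈ s, h a := by
        by_cases a3 : ⊤ * a2w ≤ p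
        · rw [← hval a2w hw2 a3]
          exact le_iSup₂ (f := fun a _ => h a) a2w ha2w
        · refine hal_c.trans ?_
          rw [← hvc a2w (m1 a2w ha2w) hw2 a3]
          exact le_iSup₂ (f := fun a _ => h a) a2w ha2w
      have harr : ar ≤ ⨆ a ∈ s, h a := by
        by_cases a2 : a3w * ⊤ ≤ p
        · rw [← hvar a3w a2 hw3]
          exact le_iSup₂ (f := fun a _ => h a) a3w ha3w
        · refine har_c.trans ?_
          rw [← hvc a3w (m1 a3w ha3w) a2 hw3]
          exact le_iSup₂ (f := fun a _ => h a) a3w ha3w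
      refine le_antisymm (by rw [← hsup]; exact sup_le hall harr) (iSup₂_le fun a' ha' => ?_)
      by_cases a0 : ⊤ * a' * ⊤ ≤ p
      · rw [hv0 a' a0]; exact bot_le
      · by_cases a2 : a' * ⊤ ≤ p
        · by_cases a3 : ⊤ * a' ≤ p
          · rw [hvb a' a0 a2 a3]; exact hb_al.le.trans hal_c
          · rw [hvar a' a2 a3]; exact har_c
        · by_cases a3 : ⊤ * a' ≤ p
          · rw [hval a' a2 a3]; exact hal_c
          · rw [hvc a' (m1 a' ha') a2 a3]
    · rw [hvt _ s1]
      obtain ⟨a, ha, ha1⟩ : ∃ a ∈ s, ¬ a ≤ p := by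
        by_contra hc
        push_neg at hc
        exact s1 (sSup_le hc)
      refine le_antisymm ?_ le_top
      rw [← hvt a ha1]
      exact le_iSup₂ (f := fun a _ => h a) a ha
  have htop : h (⊤ : Q) = ⊤ := hvt ⊤ (fun hh => hp.1 (top_le_iff.mp hh))
  exact ⟨h, hv0, hvb, hval, hvar, hvc, hvt, hsups, hmul, htop⟩
end

section
/- Let Q be a quantic frame with quotient map π : 𝕃(Q) ⊗ ℝ(Q) → Q (a surjective quantale homomorphism with π(α ⊗ ⊤) = α for left-sided α and π(⊤ ⊗ β) = β for right-sided β). If the two-sided elements 𝕀(Q) have no zero divisors, then for every left-sided α ≠ ⊥ and right-sided β ≠ ⊥, one has π(α ⊗ β) ≠ ⊥. -/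
section Aux
variable {α : Type*} [Quantale' α]

lemma qmul_mono_left {a b c : α} (h : a ≤ b) : a * c ≤ b * c := by
  have h1 : sSup {a, b} = b := by
    rw [sSup_pair, sup_eq_right.mpr h]
  have h2 := Quantale'.sSup_mul_eq ({a, b} : Set α) c
  rw [h1] at h2
  rw [h2]
  exact le_iSup₂_of_le a (by simp) le_rfl

lemma qmul_mono_right {a b c : α} (h : a ≤ b) : c * a ≤ c * b := by
  have h1 : sSup {a, b} = b := by
    rw [sSup_pair, sup_eq_right.mpr h]
  have h2 := Quantale'.mul_sSup_eq c ({a, b} : Set α)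
  rw [h1] at h2
  rw [h2]
  exact le_iSup₂_of_le a (by simp) le_rfl

lemma qmul_mono {a b c d : α} (h1 : a ≤ b) (h2 : c ≤ d) : a * c ≤ b * d :=
  le_trans (qmul_mono_left h1) (qmul_mono_right h2)

lemma qbot_mul (a : α) : (⊥ : α) * a = ⊥ := by
  have h := Quantale'.sSup_mul_eq (∅ : Set α) a
  simpa using h

lemma qmul_bot (a : α) : a * (⊥ : α) = ⊥ := by
  have h := Quantale'.mul_sSup_eq a (∅ : Set α)
  simpa using h

lemma qtop_left : IsLeftSided (⊤ : α) := le_top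

lemma qtop_right : IsRightSided (⊤ : α) := le_top

end Aux

/-- Let `Q` be a quantic frame with quotient map
`π : 𝕃(Q) ⊗ ℝ(Q) → Q` (a surjective quantale homomorphism with `π (α ⊗ ⊤) = α` for
left-sided `α` and `π (⊤ ⊗ β) = β` for right-sided `β`).  If the two-sided elements
of `Q` have no zero divisors, then `π (α ⊗ β) ≠ ⊥` for every left-sided `α ≠ ⊥` and
right-sided `β ≠ ⊥`. -/
theorem stmt17 {Q T : Type u} [Quantale' Q] [Quantale' T]
    (hsu : SemiUnital Q)
    (tmul : Q → Q → T)
    (htmulL : ∀ (s : Set Q) (b : Q), tmul (sSup s) b = ⨆ a ∈ s, tmul a b)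
    (htmulR : ∀ (a : Q) (s : Set Q), tmul a (sSup s) = ⨆ b ∈ s, tmul a b)
    (htmulMul : ∀ a₁ a₂ b₁ b₂ : Q, IsLeftSided a₁ → IsLeftSided a₂ →
      IsRightSided b₁ → IsRightSided b₂ →
      tmul a₁ b₁ * tmul a₂ b₂ = tmul (a₁ * a₂) (b₁ * b₂))
    (π : T → Q) (hπsurj : Function.Surjective π)
    (hπjoin : ∀ s : Set T, π (sSup s) = ⨆ x ∈ s, π x)
    (hπmul : ∀ x y : T, π (x * y) = π x * π y)
    (hπL : ∀ a : Q, IsLeftSided a → π (tmul a ⊤) = a)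
    (hπR : ∀ b : Q, IsRightSided b → π (tmul ⊤ b) = b)
    (hI : ∀ x y : Q, IsTwoSided x → IsTwoSided y → x ≠ ⊥ → y ≠ ⊥ → x * y ≠ ⊥) :
    ∀ α β : Q, IsLeftSided α → IsRightSided β → α ≠ ⊥ → β ≠ ⊥ →
      π (tmul α β) ≠ ⊥ := by
  intro a b ha hb hane hbne
  -- monotonicity of tmul and π
  have tmono : ∀ {a1 a2 b1 b2 : Q}, a1 ≤ a2 → b1 ≤ b2 → tmul a1 b1 ≤ tmul a2 b2 := by
    intro a1 a2 b1 b2 h1 h2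
    have e1 : tmul a2 b1 ≤ tmul a2 b2 := by
      have h1' : sSup {b1, b2} = b2 := by rw [sSup_pair, sup_eq_right.mpr h2]
      have h3 := htmulR a2 ({b1, b2} : Set Q)
      rw [h1'] at h3
      rw [h3]
      exact le_iSup₂_of_le b1 (by simp) le_rfl
    have e2 : tmul a1 b1 ≤ tmul a2 b1 := by
      have h1' : sSup {a1, a2} = a2 := by rw [sSup_pair, sup_eq_right.mpr h1]
      have h3 := htmulL ({a1, a2} : Set Q) b1
      rw [h1'] at h3
      rw [h3]
      exact le_iSup₂_of_le a1 (by simp) le_rfl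
    exact le_trans e2 e1
  have pmono : ∀ {x y : T}, x ≤ y → π x ≤ π y := by
    intro x y h
    have h1' : sSup {x, y} = y := by rw [sSup_pair, sup_eq_right.mpr h]
    have h3 := hπjoin ({x, y} : Set T)
    rw [h1'] at h3
    rw [h3]
    exact le_iSup₂_of_le x (by simp) le_rfl
  -- a*⊤ and ⊤*b are two-sided and nonzero
  have haT : IsTwoSided (a * ⊤) := by
    constructor
    · show ⊤ * (a * ⊤) ≤ a * ⊤
      rw [← mul_assoc]
      exact qmul_mono_left ha
    · show (a * ⊤) * ⊤ ≤ a * ⊤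
      rw [mul_assoc]
      exact qmul_mono_right le_top
  have hTb : IsTwoSided (⊤ * b) := by
    constructor
    · show ⊤ * (⊤ * b) ≤ ⊤ * b
      rw [← mul_assoc]
      exact qmul_mono_left le_top
    · show (⊤ * b) * ⊤ ≤ ⊤ * b
      rw [mul_assoc]
      exact qmul_mono_right hb
  have haTne : a * ⊤ ≠ ⊥ := by
    intro h
    exact hane (le_bot_iff.mp (h ▸ (hsu a).2))
  have hTbne : ⊤ * b ≠ ⊥ := by
    intro h
    exact hbne (le_bot_iff.mp (h ▸ (hsu b).1))
  have key : (a * ⊤) * (⊤ * b) ≠ ⊥ := hI _ _ haT hTb haTne hTbne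
  -- compute (a*⊤)*(⊤*b) via π
  have haT' : IsLeftSided (a * ⊤) := haT.1
  have hTb' : IsRightSided (⊤ * b) := hTb.2
  have e1 : π (tmul ((a * ⊤) * ⊤) (⊤ * (⊤ * b))) = (a * ⊤) * (⊤ * b) := by
    rw [← htmulMul (a * ⊤) ⊤ ⊤ (⊤ * b) haT' qtop_left qtop_right hTb',
        hπmul, hπL _ haT', hπR _ hTb']
  -- compare with tmul ((⊤*a)*⊤) ((⊤*b)*⊤)
  have e2 : π (tmul ((⊤ * a) * ⊤) ((⊤ * b) * ⊤)) = ⊤ * π (tmul a b) * ⊤ := by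
    have hTa : IsLeftSided (⊤ * a) := by
      show ⊤ * (⊤ * a) ≤ ⊤ * a
      rw [← mul_assoc]
      exact qmul_mono_left le_top
    have st1 : tmul (⊤:Q) ⊤ * tmul a b = tmul (⊤ * a) (⊤ * b) :=
      htmulMul ⊤ a ⊤ b qtop_left ha qtop_right hb
    have st2 : tmul (⊤ * a) (⊤ * b) * tmul (⊤:Q) ⊤ = tmul ((⊤ * a) * ⊤) ((⊤ * b) * ⊤) :=
      htmulMul (⊤ * a) ⊤ (⊤ * b) ⊤ hTa qtop_left hTb' qtop_right
    rw [← st2, ← st1, hπmul, hπmul, hπL ⊤ qtop_left]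
  have le1 : (a * ⊤) * ⊤ ≤ (⊤ * a) * ⊤ := by
    have h1 : (a * ⊤) * ⊤ ≤ a * ⊤ := by
      rw [mul_assoc]; exact qmul_mono_right le_top
    exact le_trans h1 (qmul_mono_left (hsu a).1)
  have le2 : ⊤ * (⊤ * b) ≤ (⊤ * b) * ⊤ := by
    have h1 : ⊤ * (⊤ * b) ≤ ⊤ * b := by
      rw [← mul_assoc]; exact qmul_mono_left le_top
    exact le_trans h1 (hsu (⊤ * b)).2
  have le3 : (a * ⊤) * (⊤ * b) ≤ ⊤ * π (tmul a b) * ⊤ := by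
    rw [← e1, ← e2]
    exact pmono (tmono le1 le2)
  intro h
  rw [h, qmul_bot, qbot_mul] at le3
  exact key (le_bot_iff.mp le3)
end

section
/- Let Q be an arbitrary quantale and Q̂ = Q ∪ {⊤̂} its semi-unitalization, where ⊤̂ is a new top element which is idempotent and acts by α ⋆ ⊤̂ = α ∨ (α * ⊤) and ⊤̂ ⋆ α = α ∨ (⊤ * α). Then Q̂ is a semi-unital quantale, the old top ⊤ of Q is a two-sided prime element of Q̂, and the prime elements of Q̂ are exactly the strongly prime elements of Q together with ⊤. Consequently, Q is strongly spatial if and only if Q̂ is spatial. -/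
section SemiUnitalization

variable {Q : Type*} [Quantale' Q]

/-- The multiplication of the semi-unitalization `Q̂ = Q ∪ {⊤̂}`, realized on `WithTop Q`:
the new top `⊤̂` is idempotent and acts by `α ⋆ ⊤̂ = α ⊔ (α * ⊤)` and
`⊤̂ ⋆ α = α ⊔ (⊤ * α)`. -/
noncomputable def hatMul (x y : WithTop Q) : WithTop Q :=
  WithTop.recTopCoe
    (WithTop.recTopCoe (⊤ : WithTop Q) (fun b : Q => ((b ⊔ ⊤ * b : Q) : WithTop Q)) y)
    (fun a : Q =>
      WithTop.recTopCoe ((a ⊔ a * ⊤ : Q) : WithTop Q)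
        (fun b : Q => ((a * b : Q) : WithTop Q)) y)
    x

/-- Prime elements of the semi-unitalization `Q̂`. -/
def HatPrime (p : WithTop Q) : Prop :=
  p ≠ ⊤ ∧ ∀ x y : WithTop Q, hatMul x y ≤ p → hatMul x ⊤ ≤ p ∨ hatMul ⊤ y ≤ p

namespace StmtAux

theorem q_mul_sup (a b c : Q) : a * (b ⊔ c) = a * b ⊔ a * c := by
  have h := Quantale'.mul_sSup_eq a {b, c}
  rw [sSup_pair] at h
  rw [h, iSup_insert, iSup_singleton]

theorem q_sup_mul (b c a : Q) : (b ⊔ c) * a = b * a ⊔ c * a := by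
  have h := Quantale'.sSup_mul_eq {b, c} a
  rw [sSup_pair] at h
  rw [h, iSup_insert, iSup_singleton]

theorem q_mul_le_l (a : Q) {b c : Q} (h : b ≤ c) : a * b ≤ a * c := by
  have h2 : a * c = a * b ⊔ a * c := by rw [← q_mul_sup, sup_of_le_right h]
  rw [h2]; exact le_sup_left

theorem q_mul_le_r {b c : Q} (a : Q) (h : b ≤ c) : b * a ≤ c * a := by
  have h2 : c * a = b * a ⊔ c * a := by rw [← q_sup_mul, sup_of_le_right h]
  rw [h2]; exact le_sup_left


theorem hm_cc (a b : Q) : hatMul (a : WithTop Q) (b : WithTop Q) = ((a * b : Q) : WithTop Q) := rfl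
theorem hm_ct (a : Q) : hatMul (a : WithTop Q) (⊤ : WithTop Q) = ((a ⊔ a * ⊤ : Q) : WithTop Q) := rfl
theorem hm_tc (b : Q) : hatMul (⊤ : WithTop Q) (b : WithTop Q) = ((b ⊔ ⊤ * b : Q) : WithTop Q) := rfl
theorem hm_tt : hatMul (⊤ : WithTop Q) (⊤ : WithTop Q) = ⊤ := rfl

theorem coe_biSup (T : Set Q) (f : Q → Q) :
    ((⨆ b ∈ T, f b : Q) : WithTop Q) = ⨆ b ∈ T, ((f b : Q) : WithTop Q) := by
  simp [WithTop.coe_iSup, OrderTop.bddAbove]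

theorem biSup_sup' (T : Set Q) (f g : Q → Q) :
    (⨆ b ∈ T, (f b ⊔ g b)) = (⨆ b ∈ T, f b) ⊔ ⨆ b ∈ T, g b := by
  simp_rw [iSup_subtype']; exact iSup_sup_eq

theorem hm_assoc (x y z : WithTop Q) : hatMul (hatMul x y) z = hatMul x (hatMul y z) := by
  induction x using WithTop.recTopCoe with
  | top =>
    induction y using WithTop.recTopCoe with
    | top =>
      induction z using WithTop.recTopCoe with
      | top => rfl
      | coe c =>
        simp only [hm_tt, hm_tc, WithTop.coe_inj]
        rw [q_mul_sup]
        refine le_antisymm le_sup_left (sup_le le_rfl (sup_le le_sup_right ?_))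
        calc ⊤ * (⊤ * c) = ⊤ * ⊤ * c := (mul_assoc _ _ _).symm
          _ ≤ ⊤ * c := q_mul_le_r c le_top
          _ ≤ c ⊔ ⊤ * c := le_sup_right
    | coe b =>
      induction z using WithTop.recTopCoe with
      | top =>
        simp only [hm_tt, hm_tc, hm_ct, WithTop.coe_inj]
        rw [q_sup_mul, q_mul_sup, mul_assoc]
        refine le_antisymm ?_ ?_ <;>
          simp only [sup_le_iff] <;>
          refine ⟨⟨?_, ?_⟩, ?_, ?_⟩ <;>
          simp [le_sup_left, le_sup_right, le_sup_of_le_left, le_sup_of_le_right]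
      | coe c =>
        simp only [hm_tc, hm_cc, WithTop.coe_inj]
        rw [q_sup_mul, mul_assoc]
  | coe a =>
    induction y using WithTop.recTopCoe with
    | top =>
      induction z using WithTop.recTopCoe with
      | top =>
        simp only [hm_tt, hm_ct, WithTop.coe_inj]
        rw [q_sup_mul]
        refine le_antisymm (sup_le le_rfl (sup_le le_sup_right ?_)) le_sup_left
        calc a * ⊤ * ⊤ = a * (⊤ * ⊤) := mul_assoc _ _ _
          _ ≤ a * ⊤ := q_mul_le_l a le_top
          _ ≤ a ⊔ a * ⊤ := le_sup_right
      | coe c =>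
        simp only [hm_ct, hm_cc, hm_tc, WithTop.coe_inj]
        rw [q_sup_mul, q_mul_sup, mul_assoc]
    | coe b =>
      induction z using WithTop.recTopCoe with
      | top =>
        simp only [hm_cc, hm_ct, WithTop.coe_inj]
        rw [q_mul_sup, mul_assoc]
      | coe c =>
        simp only [hm_cc, WithTop.coe_inj]
        exact mul_assoc a b c

theorem hm_mono_r (x : WithTop Q) {y z : WithTop Q} (h : y ≤ z) : hatMul x y ≤ hatMul x z := by
  induction z using WithTop.recTopCoe with
  | top =>
    induction y using WithTop.recTopCoe with
    | top => exact le_rfl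
    | coe b =>
      induction x using WithTop.recTopCoe with
      | top => rw [hm_tc, hm_tt]; exact le_top
      | coe a =>
        rw [hm_cc, hm_ct, WithTop.coe_le_coe]
        exact le_sup_of_le_right (q_mul_le_l a le_top)
  | coe c =>
    have hy : ∃ b : Q, y = (b : WithTop Q) ∧ b ≤ c := by
      induction y using WithTop.recTopCoe with
      | top => exact absurd h (by simp)
      | coe b => exact ⟨b, rfl, WithTop.coe_le_coe.mp h⟩
    obtain ⟨b, rfl, hbc⟩ := hy
    induction x using WithTop.recTopCoe with
    | top =>
      rw [hm_tc, hm_tc, WithTop.coe_le_coe]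
      exact sup_le_sup hbc (q_mul_le_l ⊤ hbc)
    | coe a =>
      rw [hm_cc, hm_cc, WithTop.coe_le_coe]
      exact q_mul_le_l a hbc

theorem hm_mono_l {y z : WithTop Q} (x : WithTop Q) (h : y ≤ z) : hatMul y x ≤ hatMul z x := by
  induction z using WithTop.recTopCoe with
  | top =>
    induction y using WithTop.recTopCoe with
    | top => exact le_rfl
    | coe b =>
      induction x using WithTop.recTopCoe with
      | top => rw [hm_ct, hm_tt]; exact le_top
      | coe a =>
        rw [hm_cc, hm_tc, WithTop.coe_le_coe]
        exact le_sup_of_le_right (q_mul_le_r a le_top)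
  | coe c =>
    have hy : ∃ b : Q, y = (b : WithTop Q) ∧ b ≤ c := by
      induction y using WithTop.recTopCoe with
      | top => exact absurd h (by simp)
      | coe b => exact ⟨b, rfl, WithTop.coe_le_coe.mp h⟩
    obtain ⟨b, rfl, hbc⟩ := hy
    induction x using WithTop.recTopCoe with
    | top =>
      rw [hm_ct, hm_ct, WithTop.coe_le_coe]
      exact sup_le_sup hbc (q_mul_le_r ⊤ hbc)
    | coe a =>
      rw [hm_cc, hm_cc, WithTop.coe_le_coe]
      exact q_mul_le_r a hbc


theorem hm_sSup_r (x : WithTop Q) (s : Set (WithTop Q)) :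
    hatMul x (sSup s) = ⨆ y ∈ s, hatMul x y := by
  by_cases hs : ⊤ ∈ s
  · have h1 : sSup s = ⊤ := eq_top_iff.mpr (le_sSup hs)
    rw [h1]
    refine le_antisymm ?_ (iSup₂_le fun y _ => hm_mono_r x le_top)
    exact le_iSup₂_of_le ⊤ hs le_rfl
  · have hsub : s ⊆ Set.range ((↑) : Q → WithTop Q) := by
      intro y hy
      induction y using WithTop.recTopCoe with
      | top => exact absurd hy hs
      | coe b => exact ⟨b, rfl⟩
    have him : (fun a : Q => (a : WithTop Q)) '' ((fun a : Q => (a : WithTop Q)) ⁻¹' s) = s :=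
      Set.image_preimage_eq_of_subset hsub
    set T := (fun a : Q => (a : WithTop Q)) ⁻¹' s with hT
    have hsup : sSup s = ((sSup T : Q) : WithTop Q) := by
      rw [← him, ← WithTop.coe_sSup' (OrderTop.bddAbove T)]
    rw [hsup, ← him, iSup_image]
    induction x using WithTop.recTopCoe with
    | top =>
      simp only [hm_tc]
      rw [← coe_biSup T (fun b => b ⊔ ⊤ * b), WithTop.coe_inj,
        biSup_sup' T (fun b => b) (fun b => ⊤ * b), Quantale'.mul_sSup_eq, sSup_eq_iSup]
    | coe a =>
      simp only [hm_cc]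
      rw [← coe_biSup T (fun b => a * b), WithTop.coe_inj, Quantale'.mul_sSup_eq]

theorem hm_sSup_l (s : Set (WithTop Q)) (x : WithTop Q) :
    hatMul (sSup s) x = ⨆ y ∈ s, hatMul y x := by
  by_cases hs : ⊤ ∈ s
  · have h1 : sSup s = ⊤ := eq_top_iff.mpr (le_sSup hs)
    rw [h1]
    refine le_antisymm ?_ (iSup₂_le fun y _ => hm_mono_l x le_top)
    exact le_iSup₂_of_le ⊤ hs le_rfl
  · have hsub : s ⊆ Set.range ((↑) : Q → WithTop Q) := by
      intro y hy
      induction y using WithTop.recTopCoe with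
      | top => exact absurd hy hs
      | coe b => exact ⟨b, rfl⟩
    have him : (fun a : Q => (a : WithTop Q)) '' ((fun a : Q => (a : WithTop Q)) ⁻¹' s) = s :=
      Set.image_preimage_eq_of_subset hsub
    set T := (fun a : Q => (a : WithTop Q)) ⁻¹' s with hT
    have hsup : sSup s = ((sSup T : Q) : WithTop Q) := by
      rw [← him, ← WithTop.coe_sSup' (OrderTop.bddAbove T)]
    rw [hsup, ← him, iSup_image]
    induction x using WithTop.recTopCoe with
    | top =>
      simp only [hm_ct]
      rw [← coe_biSup T (fun b => b ⊔ b * ⊤), WithTop.coe_inj,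
        biSup_sup' T (fun b => b) (fun b => b * ⊤), Quantale'.sSup_mul_eq, sSup_eq_iSup]
    | coe a =>
      simp only [hm_cc]
      rw [← coe_biSup T (fun b => b * a), WithTop.coe_inj, Quantale'.sSup_mul_eq]

theorem hm_semiunital (x : WithTop Q) : x ≤ hatMul ⊤ x ∧ x ≤ hatMul x ⊤ := by
  induction x using WithTop.recTopCoe with
  | top => exact ⟨le_rfl, le_rfl⟩
  | coe a =>
    refine ⟨?_, ?_⟩
    · rw [hm_tc]; exact WithTop.coe_le_coe.mpr le_sup_left
    · rw [hm_ct]; exact WithTop.coe_le_coe.mpr le_sup_left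

theorem hatPrime_coe_top : HatPrime (((⊤ : Q) : WithTop Q)) := by
  refine ⟨WithTop.coe_ne_top, fun x y h => ?_⟩
  induction x using WithTop.recTopCoe with
  | top =>
    induction y using WithTop.recTopCoe with
    | top => rw [hm_tt] at h; exact absurd (top_le_iff.mp h) WithTop.coe_ne_top
    | coe b => right; rw [hm_tc]; exact WithTop.coe_le_coe.mpr le_top
  | coe a => left; rw [hm_ct]; exact WithTop.coe_le_coe.mpr le_top

theorem hatPrime_char (p : WithTop Q) : HatPrime p ↔
    (p = ((⊤ : Q) : WithTop Q) ∨ ∃ q : Q, IsStronglyPrime q ∧ p = (q : WithTop Q)) := by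
  constructor
  · rintro ⟨hne, hp⟩
    induction p using WithTop.recTopCoe with
    | top => exact absurd rfl hne
    | coe q =>
      by_cases hq : q = ⊤
      · left; rw [hq]
      · right
        refine ⟨q, ⟨hq, fun a b hab => ?_⟩, rfl⟩
        have h := hp (↑a) (↑b) (by rw [hm_cc]; exact WithTop.coe_le_coe.mpr hab)
        rcases h with h | h
        · left; exact WithTop.coe_le_coe.mp (by rwa [hm_ct] at h)
        · right; exact WithTop.coe_le_coe.mp (by rwa [hm_tc] at h)
  · rintro (rfl | ⟨q, ⟨hq, hsp⟩, rfl⟩)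
    · exact hatPrime_coe_top
    · refine ⟨WithTop.coe_ne_top, fun x y h => ?_⟩
      induction x using WithTop.recTopCoe with
      | top =>
        induction y using WithTop.recTopCoe with
        | top => rw [hm_tt] at h; exact absurd (top_le_iff.mp h) WithTop.coe_ne_top
        | coe b => exact Or.inr h
      | coe a =>
        induction y using WithTop.recTopCoe with
        | top => exact Or.inl h
        | coe b =>
          rw [hm_cc, WithTop.coe_le_coe] at h
          rcases hsp a b h with h2 | h2
          · left; rw [hm_ct]; exact WithTop.coe_le_coe.mpr h2
          · right; rw [hm_tc]; exact WithTop.coe_le_coe.mpr h2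

theorem spatial_iff : StronglySpatial Q ↔
    ∀ x : WithTop Q, ∃ S : Set (WithTop Q), (∀ p ∈ S, HatPrime p) ∧ x = sInf S := by
  constructor
  · intro hQ x
    induction x using WithTop.recTopCoe with
    | top => exact ⟨∅, by simp, by simp⟩
    | coe a =>
      obtain ⟨S₀, hS₀, ha⟩ := hQ a
      refine ⟨(fun q : Q => (q : WithTop Q)) '' (insert ⊤ S₀), ?_, ?_⟩
      · rintro p ⟨q, hq, rfl⟩
        rcases hq with rfl | hq
        · exact hatPrime_coe_top
        · exact (hatPrime_char _).mpr (Or.inr ⟨q, hS₀ q hq, rfl⟩)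
      · have h2 : ((sInf (insert ⊤ S₀) : Q) : WithTop Q)
            = sInf ((fun q : Q => (q : WithTop Q)) '' (insert ⊤ S₀)) :=
          WithTop.coe_sInf' (Set.insert_nonempty _ _) (OrderBot.bddBelow _)
        rw [← h2, WithTop.coe_inj, sInf_insert, top_inf_eq]
        exact ha
  · intro hhat a
    obtain ⟨S, hS, ha⟩ := hhat (↑a)
    refine ⟨{q : Q | IsStronglyPrime q ∧ (q : WithTop Q) ∈ S}, fun q hq => hq.1, ?_⟩
    apply le_antisymm
    · refine le_sInf fun q hq => WithTop.coe_le_coe.mp ?_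
      rw [ha]; exact sInf_le hq.2
    · refine WithTop.coe_le_coe.mp ?_
      rw [ha]
      refine le_sInf fun p hp => ?_
      rcases (hatPrime_char p).mp (hS p hp) with rfl | ⟨q, hq, rfl⟩
      · exact WithTop.coe_le_coe.mpr le_top
      · exact WithTop.coe_le_coe.mpr (sInf_le ⟨hq, hp⟩)

end StmtAux

/-- The semi-unitalization `Q̂` of a quantale `Q` is a semi-unital
quantale, the old top `⊤` of `Q` is a two-sided prime element of `Q̂`, the primes of
`Q̂` are exactly the strongly prime elements of `Q` together with the old top `⊤`, and
`Q` is strongly spatial iff `Q̂` is spatial. -/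
theorem stmt19 :
    (∀ x y z : WithTop Q, hatMul (hatMul x y) z = hatMul x (hatMul y z)) ∧
    (∀ (x : WithTop Q) (s : Set (WithTop Q)), hatMul x (sSup s) = ⨆ y ∈ s, hatMul x y) ∧
    (∀ (s : Set (WithTop Q)) (x : WithTop Q), hatMul (sSup s) x = ⨆ y ∈ s, hatMul y x) ∧
    hatMul (⊤ : WithTop Q) (⊤ : WithTop Q) = ⊤ ∧
    (∀ x : WithTop Q, x ≤ hatMul ⊤ x ∧ x ≤ hatMul x ⊤) ∧
    hatMul (((⊤ : Q) : WithTop Q)) ⊤ ≤ ((⊤ : Q) : WithTop Q) ∧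
    hatMul ⊤ (((⊤ : Q) : WithTop Q)) ≤ ((⊤ : Q) : WithTop Q) ∧
    HatPrime (((⊤ : Q) : WithTop Q)) ∧
    (∀ p : WithTop Q, HatPrime p ↔
      (p = ((⊤ : Q) : WithTop Q) ∨ ∃ q : Q, IsStronglyPrime q ∧ p = (q : WithTop Q))) ∧
    (StronglySpatial Q ↔
      ∀ x : WithTop Q, ∃ S : Set (WithTop Q), (∀ p ∈ S, HatPrime p) ∧ x = sInf S) := by
  refine ⟨StmtAux.hm_assoc, StmtAux.hm_sSup_r, StmtAux.hm_sSup_l, StmtAux.hm_tt,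
      StmtAux.hm_semiunital, ?_, ?_, StmtAux.hatPrime_coe_top, StmtAux.hatPrime_char,
      StmtAux.spatial_iff⟩
  · rw [StmtAux.hm_ct]; exact WithTop.coe_le_coe.mpr (sup_le le_rfl le_top)
  · rw [StmtAux.hm_tc]; exact WithTop.coe_le_coe.mpr (sup_le le_rfl le_top)
end SemiUnitalization
end
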